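/- Let c ∈ ℚ \ {0, 4} and α = (c + √(c(c−4)))/(2c). Then the conjugation of ψ_c(x) = (2x − 1)/(cx² − 1) by the linear fractional map σ sending the critical 2-cycle {α, 1−α} to {0, ∞} yields the map x ↦ (cα − 1)/x², i.e., there is σ ∈ PGL₂(ℚ(α)) with σ(0) = α, σ(∞) = 1 − α, such that σ⁻¹ ∘ ψ_c ∘ σ = (cα − 1)/x². -/

import Mathlib

noncomputable section
open scoped Classical

/-- The Möbius transformation `x ↦ (ax + b)/(ex + d)` (with `ad − be ≠ 0`) as a map of
`ℙ¹(K) = K ∪ {∞}`, with `∞` encoded as `none`. -/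
def mobius {K : Type*} [Field K] (a b e d : K) : Option K → Option K
  | none => if e = 0 then none else some (a/e)
  | some x => if e*x + d = 0 then none else some ((a*x + b)/(e*x + d))

/-- The map `ψ_c(x) = (2x − 1)/(cx² − 1)` on `ℙ¹(K)`; `ψ_c(∞) = 0`. -/
def psiOpt {K : Type*} [Field K] (c : K) : Option K → Option K
  | none => some 0
  | some x => if c*x^2 - 1 = 0 then none else some ((2*x - 1)/(c*x^2 - 1))

/-- The map `x ↦ a/x²` on `ℙ¹(K)`: `0 ↦ ∞` and `∞ ↦ 0`. -/
def invSq {K : Type*} [Field K] (a : K) : Option K → Option K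
  | none => some 0
  | some x => if x = 0 then none else some (a/x^2)

set_option maxHeartbeats 1600000 in
/-- Let `c ∈ ℚ \ {0,4}` and `α = (c + √(c(c−4)))/(2c)`. There is a Möbius transformation
`σ` with `σ(0) = α` and `σ(∞) = 1 − α` conjugating `ψ_c(x) = (2x−1)/(cx²−1)` to
`x ↦ (cα − 1)/x²`, i.e. `ψ_c ∘ σ = σ ∘ ((cα−1)/x²)`. -/
theorem stmt_5 (c : ℚ) (hc0 : c ≠ 0) (hc4 : c ≠ 4)
    (s : AlgebraicClosure ℚ) (hs : s^2 = (c : AlgebraicClosure ℚ) * ((c : AlgebraicClosure ℚ) - 4))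
    (α : AlgebraicClosure ℚ) (hα : α = ((c : AlgebraicClosure ℚ) + s)/(2*c)) :
    ∃ a b e d : AlgebraicClosure ℚ, a*d - b*e ≠ 0 ∧
      mobius a b e d (some 0) = some α ∧
      mobius a b e d none = some (1 - α) ∧
      ∀ P : Option (AlgebraicClosure ℚ),
        psiOpt (c : AlgebraicClosure ℚ) (mobius a b e d P) =
          mobius a b e d (invSq ((c : AlgebraicClosure ℚ) * α - 1) P) := by
  have hc0K : (c : AlgebraicClosure ℚ) ≠ 0 := by exact_mod_cast hc0
  have hc4K : (c : AlgebraicClosure ℚ) ≠ 4 := by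
    intro h; exact hc4 (by exact_mod_cast h)
  set C : AlgebraicClosure ℚ := (c : AlgebraicClosure ℚ) with hCdef
  have hα2 : 2*C*α = C + s := by
    rw [hα]; field_simp
  have h1 : C*α^2 - C*α + 1 = 0 := by
    have key : (4*C^2) * (C*α^2 - C*α + 1) = 0 := by
      linear_combination (C*(2*C*α) + C*(C+s) - 2*C^2)*hα2 + C*hs
    rcases mul_eq_zero.mp key with h | h
    · exact absurd h (mul_ne_zero (by norm_num) (pow_ne_zero 2 hc0K))
    · exact h
  have h2 : 2*α - 1 ≠ 0 := fun h => hc4K (by linear_combination (-4)*h1 + C*(2*α-1)*h)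
  have h3 : C*α - 2 ≠ 0 := fun h => hc4K (by linear_combination (-C)*h1 + (C*α - C + 2)*h)
  have h4 : C - C*α - 2 ≠ 0 := fun h => hc4K (by linear_combination (-C)*h1 + (2 - C*α)*h)
  have h5 : C*α - 1 ≠ 0 := fun h => by
    have : (1 : AlgebraicClosure ℚ) = 0 := by linear_combination C*h1 - (C*α - C + 1)*h
    exact one_ne_zero this
  have h6 : C*α^2 - 1 ≠ 0 := fun h => h3 (by linear_combination h - h1)
  have h7 : C*(1-α)^2 - 1 ≠ 0 := fun h => h4 (by linear_combination h - h1)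
  have hm0 : mobius (α-1) α (-1) 1 (some 0) = some α := by simp [mobius]
  have hminf : mobius (α-1) α (-1) 1 none = some (1-α) := by
    simp only [mobius]
    rw [if_neg (by norm_num : (-1 : AlgebraicClosure ℚ) ≠ 0)]
    congr 1; field_simp; ring
  have psi_none : psiOpt C none = some 0 := rfl
  have psi_some : ∀ v : AlgebraicClosure ℚ, psiOpt C (some v) =
      if C*v^2 - 1 = 0 then none else some ((2*v - 1)/(C*v^2 - 1)) := fun v => rfl
  have mob_some : ∀ v : AlgebraicClosure ℚ, mobius (α-1) α (-1) 1 (some v) =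
      if -1*v + 1 = 0 then none else some (((α-1)*v + α)/(-1*v + 1)) := fun v => rfl
  have inv_some : ∀ v : AlgebraicClosure ℚ, invSq (C*α-1) (some v) =
      if v = 0 then none else some ((C*α-1)/v^2) := fun v => rfl
  refine ⟨α - 1, α, -1, 1, fun h => h2 (by linear_combination h), hm0, hminf, ?_⟩
  rintro (_ | x)
  · -- P = ∞
    rw [show invSq (C*α-1) none = some 0 from rfl, hm0, hminf, psi_some]
    rw [if_neg h7, Option.some.injEq, div_eq_iff h7]
    linear_combination (1-α)*h1
  · by_cases hx0 : x = 0
    · subst hx0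
      rw [show invSq (C*α-1) (some 0) = none by simp [invSq], hminf, hm0, psi_some]
      rw [if_neg h6, Option.some.injEq, div_eq_iff h6]
      linear_combination α*h1
    · by_cases hx1 : x = 1
      · subst hx1
        have hdA : (-1 : AlgebraicClosure ℚ)*((C*α-1)/1^2) + 1 ≠ 0 := by
          intro h; exact h3 (by norm_num at h; linear_combination -h)
        rw [mob_some 1, if_pos (by norm_num), psi_none,
            inv_some 1, if_neg one_ne_zero, mob_some _, if_neg hdA, Option.some.injEq,
            eq_comm, div_eq_zero_iff]
        left; norm_num; linear_combination h1
      · have hx1' : (-1 : AlgebraicClosure ℚ)*x + 1 ≠ 0 := fun h => hx1 (by linear_combination -h)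
        have hne : (-x + 1 : AlgebraicClosure ℚ) ≠ 0 := fun h => hx1 (by linear_combination -h)
        by_cases hxA : x^2 = C*α - 1
        · have key1 : C*(((α-1)*x+α)/(-1*x+1))^2 - 1 = 0 := by
            field_simp [hne]
            linear_combination ((x+1)^2 - C)*h1 + (C - C*α - 2)*hxA
          have key2 : (-1 : AlgebraicClosure ℚ)*((C*α-1)/x^2) + 1 = 0 := by
            rw [← hxA, div_self (pow_ne_zero 2 hx0)]; ring
          rw [mob_some x, if_neg hx1', psi_some, if_pos key1,
              inv_some x, if_neg hx0, mob_some _, if_pos key2]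
        · have hd1 : C*(((α-1)*x+α)/(-1*x+1))^2 - 1 ≠ 0 := by
            intro h
            apply hxA
            have hfac : (C - C*α - 2) * (x^2 - (C*α-1)) = 0 := by
              field_simp [hne] at h
              linear_combination h - ((x+1)^2 - C)*h1
            rcases mul_eq_zero.mp hfac with h' | h'
            · exact absurd h' h4
            · linear_combination h'
          have hd2 : (-1 : AlgebraicClosure ℚ)*((C*α-1)/x^2) + 1 ≠ 0 := by
            intro h
            apply hxA
            field_simp at h
            linear_combination h
          have hdw : x^2 - (C*α-1) ≠ 0 := sub_ne_zero.mpr hxA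
          have hr : ((α-1)*((C*α-1)/x^2) + α)/(-1*((C*α-1)/x^2) + 1)
              = (α*x^2 + (α-1)*(C*α-1))/(x^2 - (C*α-1)) := by
            rw [div_eq_div_iff hd2 hdw]
            field_simp
            ring
          have hl : (2*(((α-1)*x+α)/(-1*x+1)) - 1)/(C*(((α-1)*x+α)/(-1*x+1))^2 - 1)
              = (α*x^2 + (α-1)*(C*α-1))/(x^2 - (C*α-1)) := by
            rw [div_eq_div_iff hd1 hdw]
            field_simp [hne]
            linear_combination ((x^2+C*α-C+1)*(x^2-(C*α-1)) - (α*x^2+(α-1)*(C*α-1))*((x+1)^2-C) + (2*x^2 - x^3 + C*x^3 - x^5 - α*x - 2*α*x^2 - 2*C*α*x^2 - 2*C*α*x^3 + 2*α*x^4 + α*x^5 + C*α^2*x + 2*C*α^2*x^2 + C*α^2*x^3) + (-α^2*C*x^3 - 2*α^2*C*x^2 - α^2*C*x + 2*α*C*x^3 + 2*α*C*x^2 - α*x^5 - 2*α*x^4 + 2*α*x^2 + α*x - C*x^3 + x^5 + x^3 - 2*x^2))*h1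
          rw [mob_some x, if_neg hx1', psi_some, if_neg hd1,
              inv_some x, if_neg hx0, mob_some _, if_neg hd2, Option.some.injEq]
          exact hl.trans hr.symm

end
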